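/- Let k ≥ 1 and let p, p', q be probability vectors on Fin k with p_i > 0 and p'_i > 0 for all i. Then D_KL(q ∥ p) + D_KL(q ∥ p') ≥ d_TV(p, p')², i.e., inf_q (D_KL(q ∥ p) + D_KL(q ∥ p')) ≥ d_TV(p, p')². -/

import Mathlib

def IsProbVec {k : ℕ} (p : Fin k → ℝ) : Prop :=
  (∀ i, 0 ≤ p i) ∧ ∑ i, p i = 1

noncomputable def dTV {k : ℕ} (p q : Fin k → ℝ) : ℝ :=
  (1 / 2) * ∑ i, |p i - q i|

noncomputable def KL {k : ℕ} (q p : Fin k → ℝ) : ℝ :=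
  ∑ i, q i * Real.log (q i / p i)

noncomputable def Gfun (x : ℝ) : ℝ := x * Real.log x - x + 1 - 3/2 * ((x-1)^2 / (x+2))
noncomputable def G1fun (x : ℝ) : ℝ := Real.log x - 3/2 * ((x-1)*(x+5) / (x+2)^2)

lemma hasDerivAt_Gfun {x : ℝ} (hx : 0 < x) : HasDerivAt Gfun (G1fun x) x := by
  have h2 : (x + 2) ≠ 0 := by positivity
  have h1 : HasDerivAt (fun y : ℝ => y * Real.log y) (Real.log x + 1) x := by
    have := (hasDerivAt_id x).mul (Real.hasDerivAt_log hx.ne')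
    convert this using 1
    · rfl
    · rfl
    · rfl
    · simp [hx.ne']
  have hnum : HasDerivAt (fun y : ℝ => (y-1)^2) ((2:ℕ) * (x-1)^(2-1) * 1) x :=
    ((hasDerivAt_id x).sub_const 1).pow 2
  have hden : HasDerivAt (fun y : ℝ => y + 2) 1 x := (hasDerivAt_id x).add_const 2
  have h3 : HasDerivAt (fun y : ℝ => (y-1)^2 / (y+2))
      ((((2:ℕ) * (x-1)^(2-1) * 1) * (x+2) - (x-1)^2 * 1) / (x+2)^2) x := hnum.div hden h2
  have h4 := ((h1.sub (hasDerivAt_id x)).add_const 1).sub (h3.const_mul (3/2))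
  have heq : G1fun x = Real.log x + 1 - 1 -
      3/2 * ((((2:ℕ) * (x-1)^(2-1) * 1) * (x+2) - (x-1)^2 * 1) / (x+2)^2) := by
    unfold G1fun
    field_simp
    ring
  rw [heq]
  exact h4

noncomputable def G2fun (x : ℝ) : ℝ := x⁻¹ - 27 / (x+2)^3

lemma hasDerivAt_G1fun {x : ℝ} (hx : 0 < x) : HasDerivAt G1fun (G2fun x) x := by
  have h2 : ((x + 2)^2) ≠ 0 := by positivity
  have hnum : HasDerivAt (fun y : ℝ => (y-1)*(y+5)) (1 * (x+5) + (x-1) * 1) x :=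
    ((hasDerivAt_id x).sub_const 1).mul ((hasDerivAt_id x).add_const 5)
  have hden : HasDerivAt (fun y : ℝ => (y+2)^2) ((2:ℕ) * (x+2)^(2-1) * 1) x :=
    ((hasDerivAt_id x).add_const 2).pow 2
  have h3 := hnum.div hden h2
  have h4 := (Real.hasDerivAt_log hx.ne').sub (h3.const_mul (3/2))
  have h5 : (x:ℝ) ≠ 0 := hx.ne'
  have h6 : (x + 2) ≠ 0 := by positivity
  have heq : G2fun x = x⁻¹ - 3/2 * (((1 * (x+5) + (x-1) * 1) * (x+2)^2 -
      (x-1)*(x+5) * ((2:ℕ) * (x+2)^(2-1) * 1)) / ((x+2)^2)^2) := by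
    unfold G2fun
    field_simp
    ring
  rw [heq]
  exact h4

lemma G1fun_one : G1fun 1 = 0 := by simp [G1fun]

lemma G2fun_nonneg {x : ℝ} (hx : 0 < x) : 0 ≤ G2fun x := by
  unfold G2fun
  rw [sub_nonneg]
  rw [div_le_iff₀ (by positivity), inv_mul_eq_div, le_div_iff₀ hx]
  nlinarith [sq_nonneg (x - 1), hx.le]

lemma G1fun_nonneg {x : ℝ} (hx : 1 ≤ x) : 0 ≤ G1fun x := by
  have hmono : MonotoneOn G1fun (Set.Ici 1) := by
    apply monotoneOn_of_deriv_nonneg (convex_Ici 1)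
    · exact fun y hy => ((hasDerivAt_G1fun (lt_of_lt_of_le one_pos hy)).continuousAt).continuousWithinAt
    · rw [interior_Ici]
      exact fun y hy => ((hasDerivAt_G1fun (lt_trans one_pos hy)).differentiableAt).differentiableWithinAt
    · rw [interior_Ici]
      intro y hy
      rw [(hasDerivAt_G1fun (lt_trans one_pos hy)).deriv]
      exact G2fun_nonneg (lt_trans one_pos hy)
  have := hmono (Set.mem_Ici.2 le_rfl) (Set.mem_Ici.2 hx) hx
  rwa [G1fun_one] at this

lemma G1fun_nonpos {x : ℝ} (hx0 : 0 < x) (hx : x ≤ 1) : G1fun x ≤ 0 := by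
  have hmono : MonotoneOn G1fun (Set.Icc x 1) := by
    apply monotoneOn_of_deriv_nonneg (convex_Icc x 1)
    · exact fun y hy => ((hasDerivAt_G1fun (lt_of_lt_of_le hx0 hy.1)).continuousAt).continuousWithinAt
    · rw [interior_Icc]
      exact fun y hy => ((hasDerivAt_G1fun (lt_trans hx0 hy.1)).differentiableAt).differentiableWithinAt
    · rw [interior_Icc]
      intro y hy
      rw [(hasDerivAt_G1fun (lt_trans hx0 hy.1)).deriv]
      exact G2fun_nonneg (lt_trans hx0 hy.1)
  have := hmono (Set.mem_Icc.2 ⟨le_rfl, hx⟩) (Set.mem_Icc.2 ⟨hx, le_rfl⟩) hx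
  rwa [G1fun_one] at this

lemma Gfun_one : Gfun 1 = 0 := by simp [Gfun]

lemma Gfun_nonneg {x : ℝ} (hx : 0 < x) : 0 ≤ Gfun x := by
  rcases le_total 1 x with h | h
  · have hmono : MonotoneOn Gfun (Set.Ici 1) := by
      apply monotoneOn_of_deriv_nonneg (convex_Ici 1)
      · exact fun y hy => ((hasDerivAt_Gfun (lt_of_lt_of_le one_pos hy)).continuousAt).continuousWithinAt
      · rw [interior_Ici]
        exact fun y hy => ((hasDerivAt_Gfun (lt_trans one_pos hy)).differentiableAt).differentiableWithinAt
      · rw [interior_Ici]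
        intro y hy
        rw [(hasDerivAt_Gfun (lt_trans one_pos hy)).deriv]
        exact G1fun_nonneg (le_of_lt hy)
    have := hmono (Set.mem_Ici.2 le_rfl) (Set.mem_Ici.2 h) h
    rwa [Gfun_one] at this
  · have hanti : AntitoneOn Gfun (Set.Icc x 1) := by
      apply antitoneOn_of_deriv_nonpos (convex_Icc x 1)
      · exact fun y hy => ((hasDerivAt_Gfun (lt_of_lt_of_le hx hy.1)).continuousAt).continuousWithinAt
      · rw [interior_Icc]
        exact fun y hy => ((hasDerivAt_Gfun (lt_trans hx hy.1)).differentiableAt).differentiableWithinAt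
      · rw [interior_Icc]
        intro y hy
        rw [(hasDerivAt_Gfun (lt_trans hx hy.1)).deriv]
        exact G1fun_nonpos (lt_trans hx hy.1) (le_of_lt hy.2)
    have := hanti (Set.mem_Icc.2 ⟨le_rfl, h⟩) (Set.mem_Icc.2 ⟨h, le_rfl⟩) h
    rwa [Gfun_one] at this

lemma pointwise_bound {a b : ℝ} (ha : 0 ≤ a) (hb : 0 < b) :
    a - b + 3/2 * (a-b)^2 / (a+2*b) ≤ a * Real.log (a/b) := by
  rcases eq_or_lt_of_le ha with h | h
  · have h1 : a - b + 3/2 * (a-b)^2 / (a+2*b) = -b/4 := by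
      rw [← h]; field_simp; ring
    rw [← h]
    rw [← h] at h1
    simp only [zero_mul]
    rw [h1]
    linarith
  · have hx : 0 < a / b := div_pos h hb
    have hG := Gfun_nonneg hx
    have hb' : b ≠ 0 := hb.ne'
    have hd : a / b + 2 ≠ 0 := by positivity
    have hd2 : a + 2 * b ≠ 0 := by positivity
    have key : b * Gfun (a/b) = a * Real.log (a/b) - a + b - 3/2 * (a-b)^2/(a+2*b) := by
      unfold Gfun
      field_simp
    nlinarith [mul_nonneg hb.le hG]

lemma pinsker {k : ℕ} (p q : Fin k → ℝ) (hp : IsProbVec p) (hq : IsProbVec q)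
    (hppos : ∀ i, 0 < p i) : 2 * dTV q p ^ 2 ≤ KL q p := by
  set S := ∑ i, (q i - p i)^2 / (q i + 2 * p i) with hS
  have hKL : 3/2 * S ≤ KL q p := by
    have h1 : ∀ i ∈ Finset.univ, (q i - p i) + 3/2 * (q i - p i)^2/(q i + 2*p i)
        ≤ q i * Real.log (q i / p i) := fun i _ => pointwise_bound (hq.1 i) (hppos i)
    have h2 := Finset.sum_le_sum h1
    have h3 : ∑ i, ((q i - p i) + 3/2 * (q i - p i)^2/(q i + 2*p i)) = 3/2 * S := by
      rw [Finset.sum_add_distrib, Finset.sum_sub_distrib, hq.2, hp.2, hS, Finset.mul_sum]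
      rw [sub_self, zero_add]
      apply Finset.sum_congr rfl
      intros
      ring
    rw [h3] at h2
    exact h2
  have hCS : (∑ i, |q i - p i|)^2 ≤ S * 3 := by
    have hpos : ∀ i, 0 < q i + 2 * p i := fun i => by
      have := hq.1 i; have := hppos i; linarith
    have := Finset.sum_mul_sq_le_sq_mul_sq Finset.univ
      (fun i => |q i - p i| / Real.sqrt (q i + 2 * p i))
      (fun i => Real.sqrt (q i + 2 * p i))
    have e1 : ∀ i, |q i - p i| / Real.sqrt (q i + 2 * p i) * Real.sqrt (q i + 2 * p i)
        = |q i - p i| := fun i =>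
      div_mul_cancel₀ _ (Real.sqrt_ne_zero'.2 (hpos i))
    have e2 : ∀ i, (|q i - p i| / Real.sqrt (q i + 2 * p i))^2
        = (q i - p i)^2 / (q i + 2 * p i) := fun i => by
      rw [div_pow, sq_abs, Real.sq_sqrt (hpos i).le]
    have e3 : ∑ i, (Real.sqrt (q i + 2 * p i))^2 = 3 := by
      have : ∀ i ∈ Finset.univ, (Real.sqrt (q i + 2 * p i))^2 = q i + 2 * p i :=
        fun i _ => Real.sq_sqrt (hpos i).le
      rw [Finset.sum_congr rfl this, Finset.sum_add_distrib, hq.2, ← Finset.mul_sum, hp.2]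
      norm_num
    simp only [e1, e2] at this
    rw [e3] at this
    rw [hS]
    exact this
  have hTnn : 0 ≤ ∑ i, |q i - p i| := Finset.sum_nonneg fun i _ => abs_nonneg _
  unfold dTV
  nlinarith [hKL, hCS]

theorem stmt_4 {k : ℕ} (hk : 1 ≤ k) (p p' q : Fin k → ℝ)
    (hp : IsProbVec p) (hp' : IsProbVec p') (hq : IsProbVec q)
    (hppos : ∀ i, 0 < p i) (hp'pos : ∀ i, 0 < p' i) :
    dTV p p' ^ 2 ≤ KL q p + KL q p' := by
  have A := pinsker p q hp hq hppos
  have B := pinsker p' q hp' hq hp'pos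
  have htri : dTV p p' ≤ dTV q p + dTV q p' := by
    unfold dTV
    rw [← mul_add, ← Finset.sum_add_distrib]
    apply mul_le_mul_of_nonneg_left _ (by norm_num)
    apply Finset.sum_le_sum
    intro i _
    calc |p i - p' i| ≤ |p i - q i| + |q i - p' i| := abs_sub_le _ _ _
      _ = |q i - p i| + |q i - p' i| := by rw [abs_sub_comm]
  have h1 : 0 ≤ dTV q p := by
    unfold dTV
    exact mul_nonneg (by norm_num) (Finset.sum_nonneg fun i _ => abs_nonneg _)
  have h2 : 0 ≤ dTV q p' := by
    unfold dTV
    exact mul_nonneg (by norm_num) (Finset.sum_nonneg fun i _ => abs_nonneg _)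
  have h3 : 0 ≤ dTV p p' := by
    unfold dTV
    exact mul_nonneg (by norm_num) (Finset.sum_nonneg fun i _ => abs_nonneg _)
  nlinarith [sq_nonneg (dTV q p - dTV q p')]
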